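/- Let G be a graph and v, u vertices of G with deg(v) < deg(u), and suppose every non-pendent neighbor of v lies in N^{np}(u) ∪ {u}, where N^{np}(x) denotes the set of neighbors of x having degree at least 2. Then |SW_k(G;v,v)| ≤ |SW_k(G;u,u)| for all k ≥ 0, with strict inequality for some k. -/

import Mathlib

open scoped BigOperators

universe u

/-- The signless Laplacian matrix `Q = D + A` of a graph. -/
noncomputable def signLap {V : Type u} [Fintype V] (G : SimpleGraph V) :
    Matrix V V ℝ :=
  letI := Classical.decEq V
  letI : DecidableRel G.Adj := Classical.decRel _
  Matrix.diagonal (fun i => (G.degree i : ℝ)) + G.adjMatrix ℝ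

lemma signLap_isHermitian {V : Type u} [Fintype V] (G : SimpleGraph V) :
    (signLap G).IsHermitian := by
  classical
  unfold signLap
  ext i j
  simp [Matrix.conjTranspose_apply, Matrix.add_apply, Matrix.diagonal_apply,
    SimpleGraph.adjMatrix_apply, SimpleGraph.adj_comm]
  split_ifs with h h' h' <;> simp_all [SimpleGraph.adj_comm, eq_comm] <;> subst h' <;> rfl

/-- Eigenvalues of the signless Laplacian. -/
noncomputable def signLapEig {V : Type u} [Fintype V] (G : SimpleGraph V) : V → ℝ :=
  letI := Classical.decEq V
  (signLap_isHermitian G).eigenvalues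

/-- The signless Laplacian Estrada index. -/
noncomputable def SLEE {V : Type u} [Fintype V] (G : SimpleGraph V) : ℝ :=
  ∑ i, Real.exp (signLapEig G i)

/-- The `k`-th signless Laplacian spectral moment. -/
noncomputable def specMoment {V : Type u} [Fintype V] (G : SimpleGraph V) (k : ℕ) : ℝ :=
  ∑ i, (signLapEig G i) ^ k

/-- The number of semi-edge walks of length `k` in `G` from `x` to `y`. -/
noncomputable def swCount {V : Type u} (G : SimpleGraph V) (k : ℕ) (x y : V) : ℕ :=
  Nat.card { p : (Fin (k + 1) → V) × (Fin k → Sym2 V) //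
    (∀ i : Fin k, p.2 i ∈ G.edgeSet ∧ p.1 i.castSucc ∈ p.2 i ∧ p.1 i.succ ∈ p.2 i) ∧
    p.1 0 = x ∧ p.1 (Fin.last k) = y }

/-- A unicyclic graph: connected with as many edges as vertices. -/
def IsUnicyclic {V : Type u} [Fintype V] (G : SimpleGraph V) : Prop :=
  G.Connected ∧ Nat.card G.edgeSet = Fintype.card V

/-- The cycle graph on `Fin q`. -/
def cycleGraph' (q : ℕ) : SimpleGraph (Fin q) :=
  SimpleGraph.fromRel (fun i j => (i.val + 1) % q = j.val)

/-- `C_q S(n₁,…,n_q)` : the cycle `C_q` with `n i` pendent vertices attached to vertex `i`. -/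
def CqS (q : ℕ) (n : Fin q → ℕ) : SimpleGraph (Fin q ⊕ Σ i : Fin q, Fin (n i)) :=
  SimpleGraph.fromRel (fun x y =>
    (∃ i j : Fin q, x = Sum.inl i ∧ y = Sum.inl j ∧ (i.val + 1) % q = j.val) ∨
    (∃ (i : Fin q) (p : Fin (n i)), x = Sum.inl i ∧ y = Sum.inr ⟨i, p⟩))

/-- `C_q P(n₁,…,n_q)` : the cycle `C_q` with a pendent path on `n i + 1` vertices at vertex `i`. -/
def CqP (q : ℕ) (n : Fin q → ℕ) : SimpleGraph (Fin q ⊕ Σ i : Fin q, Fin (n i)) :=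
  SimpleGraph.fromRel (fun x y =>
    (∃ i j : Fin q, x = Sum.inl i ∧ y = Sum.inl j ∧ (i.val + 1) % q = j.val) ∨
    (∃ (i : Fin q) (h : 0 < n i), x = Sum.inl i ∧ y = Sum.inr ⟨i, ⟨0, h⟩⟩) ∨
    (∃ (i : Fin q) (a b : Fin (n i)), x = Sum.inr ⟨i, a⟩ ∧ y = Sum.inr ⟨i, b⟩ ∧
      a.val + 1 = b.val))

/-- `G⁽¹⁾ = C₃S(n-3,0,0)`. -/
noncomputable def Gmax1 (m : ℕ) := CqS 3 ![m, 0, 0]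

/-- `G₍₂₎`: the cycle `C_{n-1}` with one pendent vertex attached. -/
noncomputable def Gmin2 (n : ℕ) := CqP (n - 1) (fun i => if i.val = 0 then 1 else 0)

@[reducible] private def SWalk {V : Type*} (G : SimpleGraph V) (k : ℕ) (x y : V) :=
  { p : (Fin (k + 1) → V) × (Fin k → Sym2 V) //
    (∀ i : Fin k, p.2 i ∈ G.edgeSet ∧ p.1 i.castSucc ∈ p.2 i ∧ p.1 i.succ ∈ p.2 i) ∧
    p.1 0 = x ∧ p.1 (Fin.last k) = y }

private def stepEquiv {V : Type*} (G : SimpleGraph V) (k : ℕ) (x y z : V) :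
    {w : SWalk G (k+1) x y // w.1.1 1 = z} ≃
      {e : Sym2 V // e ∈ G.edgeSet ∧ x ∈ e ∧ z ∈ e} × SWalk G k z y where
  toFun w :=
    ⟨⟨w.1.1.2 0, (w.1.2.1 0).1,
        by simpa [w.1.2.2.1] using (w.1.2.1 0).2.1,
        by simpa [Fin.succ_zero_eq_one, w.2] using (w.1.2.1 0).2.2⟩,
      ⟨(fun i => w.1.1.1 i.succ, fun i => w.1.1.2 i.succ),
        fun i => ⟨(w.1.2.1 i.succ).1,
          by simpa [← Fin.succ_castSucc] using (w.1.2.1 i.succ).2.1,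
          (w.1.2.1 i.succ).2.2⟩,
        by simpa [Fin.succ_zero_eq_one] using w.2,
        by simpa [Fin.succ_last] using w.1.2.2.2⟩⟩
  invFun q :=
    ⟨⟨⟨Fin.cons x q.2.1.1, Fin.cons q.1.1 q.2.1.2⟩,
        by
          intro i
          induction i using Fin.cases with
          | zero =>
              refine ⟨q.1.2.1, ?_, ?_⟩
              · simpa using q.1.2.2.1
              · simpa [q.2.2.2.1] using q.1.2.2.2
          | succ j =>
              refine ⟨(q.2.2.1 j).1, ?_, ?_⟩
              · simpa [← Fin.succ_castSucc] using (q.2.2.1 j).2.1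
              · simpa using (q.2.2.1 j).2.2,
        by simp,
        by simpa [← Fin.succ_last] using q.2.2.2.2⟩,
      by
        show (Fin.cons x (Subtype.val q.2).1 : Fin (k + 1 + 1) → V) 1 = z
        rw [show (1 : Fin (k + 1 + 1)) = Fin.succ 0 from Fin.succ_zero_eq_one.symm,
          Fin.cons_succ]
        exact q.2.2.2.1⟩
  left_inv w := by
    ext : 2
    · refine Prod.ext ?_ ?_
      · funext i
        induction i using Fin.cases with
        | zero => exact w.1.2.2.1.symm
        | succ j => simp
      · funext i
        induction i using Fin.cases with
        | zero => simp
        | succ j => simp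
  right_inv q := by
    refine Prod.ext ?_ ?_
    · ext : 1
      simp
    · refine Subtype.ext (Prod.ext ?_ ?_)
      · funext i; simp
      · funext i; simp

private lemma swCount_zero {V : Type*} [DecidableEq V] (G : SimpleGraph V) (x y : V) :
    swCount G 0 x y = if x = y then 1 else 0 := by
  unfold swCount
  split_ifs with h
  · subst h
    rw [Nat.card_eq_one_iff_unique]
    constructor
    · constructor
      rintro ⟨⟨p, e⟩, hw, h0, hl⟩ ⟨⟨p', e'⟩, hw', h0', hl'⟩
      ext : 1
      · refine Prod.ext ?_ ?_
        · funext i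
          have : i = 0 := Fin.ext (by have := i.isLt; omega)
          subst this
          exact h0.trans h0'.symm
        · funext i; exact i.elim0
    · exact ⟨⟨(fun _ => x, fun i => i.elim0), fun i => i.elim0, rfl, rfl⟩⟩
  · rw [Nat.card_eq_zero]
    left
    constructor
    rintro ⟨⟨p, e⟩, hw, h0, hl⟩
    exact h (h0 ▸ (by simpa [Fin.last] using hl : p 0 = y) ▸ rfl)

private lemma sym2_eq_of_mem {V : Type*} {x z : V} (hxz : x ≠ z) {e : Sym2 V}
    (hx : x ∈ e) (hz : z ∈ e) : e = s(x, z) := by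
  induction e using Sym2.ind with
  | _ a b =>
    rw [Sym2.mem_iff] at hx hz
    rcases hx with rfl | rfl <;> rcases hz with rfl | rfl
    · exact absurd rfl hxz
    · rfl
    · exact Sym2.eq_swap
    · exact absurd rfl hxz

private lemma edge_card {V : Type*} [Fintype V] [DecidableEq V] (G : SimpleGraph V)
    [DecidableRel G.Adj] (x z : V) :
    Nat.card {e : Sym2 V // e ∈ G.edgeSet ∧ x ∈ e ∧ z ∈ e} =
      if z = x then G.degree x else if G.Adj x z then 1 else 0 := by
  split_ifs with h1 h2
  · subst h1
    have e1 : {e : Sym2 V // e ∈ G.edgeSet ∧ z ∈ e ∧ z ∈ e} ≃ G.incidenceSet z :=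
      Equiv.subtypeEquivRight (fun e => by
        simp [SimpleGraph.incidenceSet, and_assoc])
    rw [Nat.card_congr e1, Nat.card_eq_fintype_card,
      SimpleGraph.card_incidenceSet_eq_degree]
  · rw [Nat.card_eq_one_iff_unique]
    constructor
    · constructor
      rintro ⟨e, he, hxe, hze⟩ ⟨e', he', hxe', hze'⟩
      exact Subtype.ext ((sym2_eq_of_mem (fun h => h1 h.symm) hxe hze).trans
        (sym2_eq_of_mem (fun h => h1 h.symm) hxe' hze').symm)
    · exact ⟨⟨s(x, z), h2, Sym2.mem_mk_left x z, Sym2.mem_mk_right x z⟩⟩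
  · rw [Nat.card_eq_zero]
    left
    constructor
    rintro ⟨e, he, hxe, hze⟩
    rw [sym2_eq_of_mem (fun h => h1 h.symm) hxe hze] at he
    exact h2 (G.mem_edgeSet.mp he)

private lemma natcard_sigma {ι : Type*} [Fintype ι] (f : ι → Type*) [∀ i, Finite (f i)] :
    Nat.card (Σ i, f i) = ∑ i, Nat.card (f i) := by
  letI : ∀ i, Fintype (f i) := fun i => Fintype.ofFinite _
  simp [Nat.card_eq_fintype_card]

private lemma swCount_succ {V : Type*} [Fintype V] [DecidableEq V] (G : SimpleGraph V)
    [DecidableRel G.Adj] (k : ℕ) (x y : V) :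
    swCount G (k + 1) x y =
      G.degree x * swCount G k x y + ∑ w ∈ G.neighborFinset x, swCount G k w y := by
  have h0 : swCount G (k + 1) x y = Nat.card (SWalk G (k + 1) x y) := rfl
  rw [h0, ← Nat.card_congr (Equiv.sigmaFiberEquiv (fun w : SWalk G (k + 1) x y => w.1.1 1)),
    natcard_sigma]
  have h1 : ∀ z, Nat.card {w : SWalk G (k + 1) x y // w.1.1 1 = z} =
      (if z = x then G.degree x else if G.Adj x z then 1 else 0) * swCount G k z y := by
    intro z
    rw [Nat.card_congr (stepEquiv G k x y z), Nat.card_prod, edge_card]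
    rfl
  rw [Finset.sum_congr rfl (fun z _ => h1 z)]
  have h2 : ∀ (z : V) (c : V → ℕ),
      (if z = x then G.degree x else if G.Adj x z then 1 else 0) * c z
      = (if z = x then G.degree x * c x else 0) + (if G.Adj x z then c z else 0) := by
    intro z c
    split_ifs with ha hb
    · exact absurd (ha ▸ hb) (G.irrefl (v := x))
    · subst ha; omega
    · omega
    · omega
  rw [Finset.sum_congr rfl (fun z _ => h2 z (fun w => swCount G k w y)), Finset.sum_add_distrib,
    Finset.sum_ite_eq' Finset.univ x (fun _ => G.degree x * swCount G k x y)]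
  simp only [Finset.mem_univ, if_true]
  congr 1
  rw [SimpleGraph.neighborFinset_eq_filter, Finset.sum_filter]

private noncomputable def Qnat {V : Type*} [Fintype V] [DecidableEq V] (G : SimpleGraph V)
    [DecidableRel G.Adj] : Matrix V V ℕ :=
  Matrix.diagonal (fun i => G.degree i) + G.adjMatrix ℕ

private lemma swCount_eq_pow {V : Type*} [Fintype V] [DecidableEq V] (G : SimpleGraph V)
    [DecidableRel G.Adj] (k : ℕ) (x y : V) :
    swCount G k x y = (Qnat G ^ k) x y := by
  induction k generalizing x with
  | zero => rw [pow_zero, Matrix.one_apply, swCount_zero]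
  | succ k ih =>
      rw [pow_succ', Qnat, Matrix.add_mul, Matrix.add_apply, Matrix.diagonal_mul,
        SimpleGraph.adjMatrix_mul_apply, swCount_succ, ih]
      congr 1
      exact Finset.sum_congr rfl (fun w _ => ih w)

private lemma swCount_symm {V : Type*} [Fintype V] [DecidableEq V] (G : SimpleGraph V)
    [DecidableRel G.Adj] (k : ℕ) (x y : V) :
    swCount G k x y = swCount G k y x := by
  have hT : (Qnat G).transpose = Qnat G := by
    rw [Qnat, Matrix.transpose_add, Matrix.diagonal_transpose, SimpleGraph.transpose_adjMatrix]
  have h2 : (Qnat G ^ k).transpose = Qnat G ^ k := by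
    rw [Matrix.transpose_pow, hT]
  rw [swCount_eq_pow, swCount_eq_pow]
  conv_lhs => rw [← h2]
  rfl

private lemma swCount_one_diag {V : Type*} [Fintype V] [DecidableEq V] (G : SimpleGraph V)
    [DecidableRel G.Adj] (x : V) : swCount G 1 x x = G.degree x := by
  rw [swCount_succ, swCount_zero, if_pos rfl, mul_one, Finset.sum_eq_zero, add_zero]
  intro w hw
  rw [swCount_zero, if_neg (G.ne_of_adj ((G.mem_neighborFinset x w).mp hw)).symm]

/-- If `deg v < deg u` and every non-pendent neighbor of `v` is `u` or a non-pendent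
neighbor of `u`, then the closed semi-edge walk counts at `v` are dominated by those
at `u`, strictly for some length. -/
theorem swCount_closed_lt_of_degree_lt {V : Type*} [Fintype V]
    (G : SimpleGraph V) [DecidableRel G.Adj] (v u : V)
    (hdeg : G.degree v < G.degree u)
    (hnp : ∀ w : V, G.Adj v w → 2 ≤ G.degree w → w = u ∨ G.Adj u w) :
    (∀ k : ℕ, swCount G k v v ≤ swCount G k u u) ∧
    (∃ k : ℕ, swCount G k v v < swCount G k u u)  := by
  classical
  have hne : u ≠ v := by rintro rfl; exact lt_irrefl _ hdeg
  set z : ℕ → V → ℕ := fun k x => swCount G k u x + swCount G k v x with hz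
  set S : ℕ → ℕ := fun k => ∑ j ∈ Finset.range k, z j v with hS
  set Pv : Finset V := (G.neighborFinset v).filter (fun w => G.degree w < 2) with hPv
  set Qv : Finset V := (G.neighborFinset v).filter (fun w => ¬ G.degree w < 2) with hQv
  set m : ℕ := Pv.card with hm
  obtain ⟨c, hc⟩ : ∃ c, G.degree u = G.degree v + (c + 1) :=
    ⟨G.degree u - G.degree v - 1, by omega⟩
  have zsucc : ∀ (k : ℕ) (x : V),
      z (k + 1) x = G.degree x * z k x + ∑ w ∈ G.neighborFinset x, z k w := by
    intro k x
    simp only [hz]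
    have hsu : (∑ w ∈ G.neighborFinset x, swCount G k w u)
        = ∑ w ∈ G.neighborFinset x, swCount G k u w :=
      Finset.sum_congr rfl fun w _ => swCount_symm G k w u
    have hsv : (∑ w ∈ G.neighborFinset x, swCount G k w v)
        = ∑ w ∈ G.neighborFinset x, swCount G k v w :=
      Finset.sum_congr rfl fun w _ => swCount_symm G k w v
    calc swCount G (k+1) u x + swCount G (k+1) v x
        = swCount G (k+1) x u + swCount G (k+1) x v := by
          rw [swCount_symm G (k+1) u x, swCount_symm G (k+1) v x]
      _ = (G.degree x * swCount G k x u + ∑ w ∈ G.neighborFinset x, swCount G k w u)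
          + (G.degree x * swCount G k x v + ∑ w ∈ G.neighborFinset x, swCount G k w v) := by
          rw [swCount_succ G k x u, swCount_succ G k x v]
      _ = G.degree x * (swCount G k u x + swCount G k v x)
          + ∑ w ∈ G.neighborFinset x, (swCount G k u w + swCount G k v w) := by
          rw [swCount_symm G k x u, swCount_symm G k x v, hsu, hsv, mul_add,
            Finset.sum_add_distrib]
          ring
  have zPv : ∀ k, ∀ p ∈ Pv, z k p = S k := by
    intro k
    induction k with
    | zero =>
        intro p hp
        obtain ⟨hmem, hdp⟩ := Finset.mem_filter.mp hp
        have hadj : G.Adj v p := (G.mem_neighborFinset v p).mp hmem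
        have hdv : 1 ≤ G.degree v := by
          rw [← G.card_neighborFinset_eq_degree]
          exact Finset.card_pos.mpr ⟨p, hmem⟩
        have hpu : p ≠ u := by intro h; subst h; omega
        have hpv : p ≠ v := (G.ne_of_adj hadj).symm
        simp only [hz, hS]
        rw [swCount_zero, swCount_zero, if_neg (fun h => hpu h.symm),
          if_neg (fun h => hpv h.symm)]
        simp
    | succ k ih =>
        intro p hp
        obtain ⟨hmem, hdp⟩ := Finset.mem_filter.mp hp
        have hadj : G.Adj v p := (G.mem_neighborFinset v p).mp hmem
        have hd1 : G.degree p = 1 := by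
          have h1 : 0 < G.degree p := by
            rw [← G.card_neighborFinset_eq_degree]
            exact Finset.card_pos.mpr ⟨v, (G.mem_neighborFinset p v).mpr hadj.symm⟩
          omega
        have hnb : G.neighborFinset p = {v} := by
          rw [Finset.eq_singleton_iff_unique_mem]
          refine ⟨(G.mem_neighborFinset p v).mpr hadj.symm, ?_⟩
          intro w hw
          by_contra hne2
          have h2 : 2 ≤ (G.neighborFinset p).card :=
            Finset.one_lt_card.mpr ⟨w, hw, v, (G.mem_neighborFinset p v).mpr hadj.symm, hne2⟩
          rw [G.card_neighborFinset_eq_degree] at h2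
          omega
        rw [zsucc, hnb, Finset.sum_singleton, hd1, one_mul, ih p hp]
        simp only [hS, Finset.sum_range_succ]
  have key : ∀ k, z k v ≤ z k u ∧ m * S k ≤ (c + 1) * z k v := by
    intro k
    induction k with
    | zero =>
        constructor
        · simp only [hz]
          rw [swCount_zero, swCount_zero, swCount_zero, swCount_zero]
          simp [hne, Ne.symm hne]
        · simp [hS, hm]
    | succ k ih =>
        obtain ⟨ih1, ih2⟩ := ih
        have hsplit : ∑ w ∈ G.neighborFinset v, z k w
            = (∑ w ∈ Pv, z k w) + ∑ w ∈ Qv, z k w :=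
          (Finset.sum_filter_add_sum_filter_not _ _ _).symm
        have hPsum : ∑ w ∈ Pv, z k w = m * S k := by
          rw [Finset.sum_congr rfl (fun p hp => zPv k p hp), Finset.sum_const, smul_eq_mul]
        have hQsub : ∀ w ∈ Qv, w = u ∨ w ∈ (G.neighborFinset u).erase v := by
          intro w hw
          obtain ⟨hmemw, hdw⟩ := Finset.mem_filter.mp hw
          have hadjw : G.Adj v w := (G.mem_neighborFinset v w).mp hmemw
          rcases hnp w hadjw (by omega) with h | h
          · exact Or.inl h
          · exact Or.inr (Finset.mem_erase.mpr
              ⟨(G.ne_of_adj hadjw).symm, (G.mem_neighborFinset u w).mpr h⟩)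
        have hm_le : m ≤ G.degree v := by
          rw [hm, hPv, ← G.card_neighborFinset_eq_degree]
          exact Finset.card_filter_le _ _
        constructor
        · by_cases hadj : G.Adj u v
          · have hQ : Qv ⊆ insert u ((G.neighborFinset u).erase v) := by
              intro w hw
              rcases hQsub w hw with h | h
              · exact h ▸ Finset.mem_insert_self _ _
              · exact Finset.mem_insert_of_mem h
            have hQle : ∑ w ∈ Qv, z k w
                ≤ z k u + ∑ w ∈ (G.neighborFinset u).erase v, z k w := by
              refine le_trans (Finset.sum_le_sum_of_subset hQ) ?_
              rw [Finset.sum_insert (fun hmem =>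
                G.notMem_neighborFinset_self u (Finset.mem_of_mem_erase hmem))]
            have hu2 : ∑ w ∈ G.neighborFinset u, z k w
                = z k v + ∑ w ∈ (G.neighborFinset u).erase v, z k w :=
              (Finset.add_sum_erase _ _ ((G.mem_neighborFinset u v).mpr hadj)).symm
            rw [zsucc k v, zsucc k u, hsplit, hPsum, hu2, hc]
            nlinarith [hQle, ih1, ih2, mul_le_mul_right ih1 (G.degree v),
              mul_le_mul_right ih1 c]
          · have hQ2 : Qv ⊆ (G.neighborFinset u).erase v := by
              intro w hw
              rcases hQsub w hw with h | h
              · exfalso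
                obtain ⟨hmemw, _⟩ := Finset.mem_filter.mp hw
                rw [h] at hmemw
                exact hadj ((G.mem_neighborFinset v u).mp hmemw).symm
              · exact h
            have hQle : ∑ w ∈ Qv, z k w
                ≤ ∑ w ∈ (G.neighborFinset u).erase v, z k w :=
              Finset.sum_le_sum_of_subset hQ2
            have hu2 : ∑ w ∈ G.neighborFinset u, z k w
                = ∑ w ∈ (G.neighborFinset u).erase v, z k w := by
              rw [Finset.erase_eq_of_notMem
                (fun hmem => hadj ((G.mem_neighborFinset u v).mp hmem))]
            rw [zsucc k v, zsucc k u, hsplit, hPsum, hu2, hc]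
            nlinarith [hQle, ih1, ih2, mul_le_mul_right ih1 (G.degree v),
              mul_le_mul_right ih1 c, mul_le_mul_right ih1 (c + 1)]
        · have hzv : G.degree v * z k v + m * S k ≤ z (k + 1) v := by
            rw [zsucc k v, hsplit, hPsum]
            exact Nat.add_le_add_left (Nat.le_add_right _ _) _
          calc m * S (k + 1) = m * S k + m * z k v := by
                simp [hS, Finset.sum_range_succ, mul_add]
            _ ≤ m * S k + G.degree v * z k v :=
                add_le_add_right (mul_le_mul_left hm_le _) _
            _ ≤ z (k + 1) v := le_of_eq_of_le (add_comm _ _) hzv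
            _ ≤ (c + 1) * z (k + 1) v := Nat.le_mul_of_pos_left _ (by omega)
  constructor
  · intro k
    have h := (key k).1
    simp only [hz] at h
    have hs := swCount_symm G k u v
    omega
  · refine ⟨1, ?_⟩
    rw [swCount_one_diag, swCount_one_diag]
    exact hdeg
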